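/- Let P be a finite set of points in ℝ² with diameter D > 0 attained by points p₁, p₂ ∈ P, let u = (p₁ − p₂)/D, and let w = w_{u⊥}(P) be the extent of P perpendicular to the diametrical pair. Then for every unit vector v ∈ ℝ²: w_v(P) ≥ D · sin(½·arcsin(w/D)). In particular, the width of the thinnest strip covering P is at least D·sin(½·arcsin(w/D)). -/

import Mathlib

open Real
open scoped RealInnerProductSpace

noncomputable section

/-- The point of `ℝ²` with coordinates `a`, `b`. -/
def pt (a b : ℝ) : EuclideanSpace ℝ (Fin 2) :=
  (WithLp.equiv 2 (Fin 2 → ℝ)).symm ![a, b]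

/-- `v` rotated counterclockwise by `π/2`. -/
def perp (v : EuclideanSpace ℝ (Fin 2)) : EuclideanSpace ℝ (Fin 2) :=
  pt (-(v 1)) (v 0)

/-- The extent of a point set `P` along a vector `v`: `max_{p,q ∈ P} ⟨p − q, v⟩`. -/
def wext (v : EuclideanSpace ℝ (Fin 2)) (P : Set (EuclideanSpace ℝ (Fin 2))) : ℝ :=
  sSup {x : ℝ | ∃ p ∈ P, ∃ q ∈ P, x = ⟪p - q, v⟫}

private lemma wext_set_eq (v : EuclideanSpace ℝ (Fin 2)) (P : Set (EuclideanSpace ℝ (Fin 2))) :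
    {x : ℝ | ∃ p ∈ P, ∃ q ∈ P, x = ⟪p - q, v⟫} =
      Set.image2 (fun p q => ⟪p - q, v⟫) P P := by
  ext x
  simp only [Set.mem_setOf_eq, Set.mem_image2]
  constructor
  · rintro ⟨p, hp, q, hq, rfl⟩; exact ⟨p, hp, q, hq, rfl⟩
  · rintro ⟨p, hp, q, hq, rfl⟩; exact ⟨p, hp, q, hq, rfl⟩

private lemma le_wext {P : Set (EuclideanSpace ℝ (Fin 2))} (hfin : P.Finite)
    (v : EuclideanSpace ℝ (Fin 2)) {p q : EuclideanSpace ℝ (Fin 2)}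
    (hp : p ∈ P) (hq : q ∈ P) : ⟪p - q, v⟫ ≤ wext v P := by
  apply le_csSup
  · rw [wext_set_eq]
    exact (hfin.image2 _ hfin).bddAbove
  · exact ⟨p, hp, q, hq, rfl⟩

private lemma wext_attained {P : Set (EuclideanSpace ℝ (Fin 2))} (hfin : P.Finite)
    (hne : P.Nonempty) (v : EuclideanSpace ℝ (Fin 2)) :
    ∃ p ∈ P, ∃ q ∈ P, wext v P = ⟪p - q, v⟫ := by
  obtain ⟨p₀, hp₀⟩ := hne
  have hmem : wext v P ∈ {x : ℝ | ∃ p ∈ P, ∃ q ∈ P, x = ⟪p - q, v⟫} := by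
    apply Set.Nonempty.csSup_mem
    · exact ⟨⟪p₀ - p₀, v⟫, p₀, hp₀, p₀, hp₀, rfl⟩
    · rw [wext_set_eq]; exact hfin.image2 _ hfin
  exact hmem

private lemma key_arith (D w a c s M : ℝ) (hD : 0 < D) (hw0 : 0 ≤ w)
    (haw : a ^ 2 + w ^ 2 ≤ D ^ 2) (hcs : c ^ 2 + s ^ 2 = 1)
    (h1 : D * c ≤ M) (h1' : -(D * c) ≤ M)
    (h2 : a * c + w * s ≤ M) (h2' : -(a * c + w * s) ≤ M) :
    D * Real.sin (1 / 2 * Real.arcsin (w / D)) ≤ M := by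
  set α := Real.arcsin (w / D) with hα
  have hwD : w / D ≤ 1 := by rw [div_le_one hD]; nlinarith
  have hwD0 : 0 ≤ w / D := div_nonneg hw0 hD.le
  have hα0 : 0 ≤ α := Real.arcsin_nonneg.2 hwD0
  have hαle : α ≤ π / 2 := Real.arcsin_le_pi_div_two _
  have hpi : (0:ℝ) < π := Real.pi_pos
  have hsinα : Real.sin α = w / D := Real.sin_arcsin (by linarith) hwD
  have hcosα : Real.cos α = Real.sqrt (1 - (w / D) ^ 2) := Real.cos_arcsin _
  have hcosα0 : 0 ≤ Real.cos α := by rw [hcosα]; exact Real.sqrt_nonneg _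
  have hcosα2 : Real.cos α ^ 2 = 1 - (w / D) ^ 2 := by
    rw [hcosα]; exact Real.sq_sqrt (by nlinarith)
  have hT0 : 0 ≤ Real.sin (1 / 2 * α) :=
    Real.sin_nonneg_of_nonneg_of_le_pi (by linarith) (by linarith)
  have hC0 : 0 ≤ Real.cos (1 / 2 * α) :=
    Real.cos_nonneg_of_mem_Icc ⟨by linarith, by linarith⟩
  have hsc : Real.sin (1/2*α) ^ 2 + Real.cos (1/2*α) ^ 2 = 1 := Real.sin_sq_add_cos_sq _
  rcases le_or_gt (Real.sin (1 / 2 * α)) |c| with h | h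
  · have hstep : D * Real.sin (1/2*α) ≤ D * |c| :=
      mul_le_mul_of_nonneg_left h hD.le
    have habs : |D * c| ≤ M := abs_le.2 ⟨by linarith, h1⟩
    calc D * Real.sin (1/2*α) ≤ D * |c| := hstep
      _ = |D * c| := by rw [abs_mul, abs_of_pos hD]
      _ ≤ M := habs
  · -- |s| ≥ cos(α/2)
    have hc2 : c ^ 2 < Real.sin (1/2*α) ^ 2 := by
      rw [← sq_abs c]
      exact pow_lt_pow_left₀ h (abs_nonneg c) (by norm_num)
    have hs2 : Real.cos (1/2*α) ^ 2 ≤ s ^ 2 := by linarith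
    have hsabs : Real.cos (1/2*α) ≤ |s| := by
      calc Real.cos (1/2*α) = Real.sqrt (Real.cos (1/2*α) ^ 2) := (Real.sqrt_sq hC0).symm
        _ ≤ Real.sqrt (s ^ 2) := Real.sqrt_le_sqrt hs2
        _ = |s| := Real.sqrt_sq_eq_abs s
    -- |a| ≤ D * cos α
    have hDcos2 : (D * Real.cos α) ^ 2 = D ^ 2 - w ^ 2 := by
      rw [mul_pow, hcosα2]
      field_simp
    have haD : |a| ≤ D * Real.cos α := by
      have ha2 : a ^ 2 ≤ (D * Real.cos α) ^ 2 := by rw [hDcos2]; linarith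
      calc |a| = Real.sqrt (a ^ 2) := (Real.sqrt_sq_eq_abs a).symm
        _ ≤ Real.sqrt ((D * Real.cos α) ^ 2) := Real.sqrt_le_sqrt ha2
        _ = D * Real.cos α := Real.sqrt_sq (mul_nonneg hD.le hcosα0)
    have hwD' : w = D * Real.sin α := by
      rw [hsinα]; field_simp
    have hhalf : Real.sin (1/2*α) =
        Real.sin α * Real.cos (1/2*α) - Real.cos α * Real.sin (1/2*α) := by
      have h' : α - 1/2*α = 1/2*α := by ring
      calc Real.sin (1/2*α) = Real.sin (α - 1/2*α) := by rw [h']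
        _ = Real.sin α * Real.cos (1/2*α) - Real.cos α * Real.sin (1/2*α) := Real.sin_sub α _
    have hM : |a * c + w * s| ≤ M := abs_le.2 ⟨by linarith, h2⟩
    have step1 : w * |s| - |a| * |c| ≤ |a * c + w * s| := by
      have hineq : |w * s| - |a * c| ≤ |a * c + w * s| := by
        have h0 := abs_sub_abs_le_abs_sub (w * s) (-(a * c))
        rw [abs_neg, sub_neg_eq_add] at h0
        rw [add_comm]
        exact h0
      rw [abs_mul, abs_mul, abs_of_nonneg hw0] at hineq
      exact hineq
    have step2 : D * Real.sin (1/2*α) ≤ w * |s| - |a| * |c| := by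
      have e1 : w * Real.cos (1/2*α) ≤ w * |s| :=
        mul_le_mul_of_nonneg_left hsabs hw0
      have e2 : |a| * |c| ≤ (D * Real.cos α) * Real.sin (1/2*α) :=
        mul_le_mul haD h.le (abs_nonneg c) (mul_nonneg hD.le hcosα0)
      have e3 : D * Real.sin (1/2*α) =
          w * Real.cos (1/2*α) - (D * Real.cos α) * Real.sin (1/2*α) := by
        rw [hwD']
        linear_combination D * hhalf
      linarith
    linarith

theorem stmt_10 (P : Set (EuclideanSpace ℝ (Fin 2))) (hfin : P.Finite)
    (D : ℝ) (hD : 0 < D)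
    (p₁ p₂ : EuclideanSpace ℝ (Fin 2)) (hp₁ : p₁ ∈ P) (hp₂ : p₂ ∈ P)
    (hdiam : ∀ p ∈ P, ∀ q ∈ P, dist p q ≤ D) (hattain : dist p₁ p₂ = D)
    (u : EuclideanSpace ℝ (Fin 2)) (hu : u = D⁻¹ • (p₁ - p₂))
    (w : ℝ) (hw : w = wext (perp u) P) :
    ∀ v : EuclideanSpace ℝ (Fin 2), ‖v‖ = 1 →
      wext v P ≥ D * Real.sin (1/2 * Real.arcsin (w / D)) := by
  intro v hv
  have hne : P.Nonempty := ⟨p₁, hp₁⟩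
  have hp12 : p₁ - p₂ = D • u := by
    rw [hu, smul_smul, mul_inv_cancel₀ hD.ne', one_smul]
  have hnu : ‖u‖ = 1 := by
    rw [hu, norm_smul, ← dist_eq_norm, hattain, norm_inv, Real.norm_eq_abs,
      abs_of_pos hD, inv_mul_cancel₀ hD.ne']
  have hinner : ∀ x y : EuclideanSpace ℝ (Fin 2), ⟪x, y⟫ = x 0 * y 0 + x 1 * y 1 := by
    intro x y
    simp [PiLp.inner_apply, Fin.sum_univ_two, RCLike.inner_apply, conj_trivial]
    ring
  have hperp0 : (perp u) 0 = -(u 1) := by simp [perp, pt]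
  have hperp1 : (perp u) 1 = u 0 := by simp [perp, pt]
  have hu2 : (u 0) ^ 2 + (u 1) ^ 2 = 1 := by
    have h := real_inner_self_eq_norm_sq u
    rw [hnu, hinner] at h
    linear_combination h
  obtain ⟨q, hq, q', hq', hwx⟩ := wext_attained hfin hne (perp u)
  have hwval : w = ⟪q - q', perp u⟫ := by rw [hw, hwx]
  have hw0 : 0 ≤ w := by
    rw [hw]
    have h := le_wext hfin (perp u) hp₁ hp₁
    simpa using h
  set c : ℝ := ⟪u, v⟫ with hcdef
  set s : ℝ := ⟪perp u, v⟫ with hsdef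
  set a : ℝ := ⟪q - q', u⟫ with hadef
  have hcc : c = u 0 * v 0 + u 1 * v 1 := by rw [hcdef, hinner]
  have hss : s = -(u 1) * v 0 + u 0 * v 1 := by rw [hsdef, hinner, hperp0, hperp1]
  have hv2 : (v 0) ^ 2 + (v 1) ^ 2 = 1 := by
    have h := real_inner_self_eq_norm_sq v
    rw [hv, hinner] at h
    linear_combination h
  have hcs : c ^ 2 + s ^ 2 = 1 := by
    rw [hcc, hss]
    linear_combination (v 0 ^ 2 + v 1 ^ 2) * hu2 + hv2
  set x0 : ℝ := (q - q') 0 with hx0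
  set x1 : ℝ := (q - q') 1 with hx1
  have haa : a = x0 * u 0 + x1 * u 1 := by rw [hadef, hinner]
  have hww : w = -(x0 * u 1) + x1 * u 0 := by rw [hwval, hinner, hperp0, hperp1]; ring
  have hqq' : ‖q - q'‖ ≤ D := by
    rw [← dist_eq_norm]; exact hdiam q hq q' hq'
  have hnormqq : x0 ^ 2 + x1 ^ 2 ≤ D ^ 2 := by
    have h := real_inner_self_eq_norm_sq (q - q')
    rw [hinner] at h
    nlinarith [norm_nonneg (q - q')]
  have haw : a ^ 2 + w ^ 2 ≤ D ^ 2 := by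
    have heq : a ^ 2 + w ^ 2 = x0 ^ 2 + x1 ^ 2 := by
      rw [haa, hww]
      linear_combination (x0 ^ 2 + x1 ^ 2) * hu2
    linarith
  have hDc : ⟪p₁ - p₂, v⟫ = D * c := by
    rw [hp12, real_inner_smul_left]
  have hqv : ⟪q - q', v⟫ = a * c + w * s := by
    rw [hinner, haa, hww, hcc, hss]
    linear_combination (-(x0 * v 0) - x1 * v 1) * hu2
  have h1 : D * c ≤ wext v P := by
    rw [← hDc]; exact le_wext hfin v hp₁ hp₂
  have h1' : -(D * c) ≤ wext v P := by
    have h := le_wext hfin v hp₂ hp₁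
    have hswap : ⟪p₂ - p₁, v⟫ = -(D * c) := by
      rw [← hDc, ← inner_neg_left, neg_sub]
    linarith [hswap ▸ h]
  have h2 : a * c + w * s ≤ wext v P := by
    rw [← hqv]; exact le_wext hfin v hq hq'
  have h2' : -(a * c + w * s) ≤ wext v P := by
    have h := le_wext hfin v hq' hq
    have hswap : ⟪q' - q, v⟫ = -(a * c + w * s) := by
      rw [← hqv, ← inner_neg_left, neg_sub]
    linarith [hswap ▸ h]
  exact key_arith D w a c s (wext v P) hD hw0 haw hcs h1 h1' h2 h2'

end
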